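/- Let L be an m×k full-rank matrix over F_q, let s(L) denote the minimal support size of a nonzero vector in the row space of L, and call B ⊆ [k] good if B is (t+1)-rank-reducing where |B| = s(L) + t for some t ≥ 0. Then every subset B' of a good set B with |B'| ≥ s(L) is itself good. -/

import Mathlib

open scoped BigOperators Classical

/-- The number of nonzero coordinates (support size) of a vector. -/
noncomputable def suppCard {F : Type*} [Field F] {k : ℕ} (v : Fin k → F) : ℕ :=
  (Finset.univ.filter fun j => v j ≠ 0).card

/-- `s(L)`: the minimal support size of a nonzero vector in the row space of `L`,
i.e. the minimal length of an equation induced by `L`. -/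
noncomputable def minLen {F : Type*} [Field F] {m k : ℕ} (L : Matrix (Fin m) (Fin k) F) : ℕ :=
  sInf {c | ∃ v ∈ Submodule.span F (Set.range fun i => L i), v ≠ 0 ∧ suppCard v = c}

/-- The rank of the matrix obtained from `L` by deleting the columns indexed by `B`. -/
noncomputable def delRank {F : Type*} [Field F] [Fintype F] {m k : ℕ}
    (L : Matrix (Fin m) (Fin k) F) (B : Finset (Fin k)) : ℕ :=
  (L.submatrix id (fun j : {j : Fin k // j ∉ B} => (j : Fin k))).rank

/-- `B` is good for `L`: writing `|B| = s(L) + t` with `t ≥ 0`, deleting the columns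
indexed by `B` decreases the rank by exactly `t + 1`. -/
noncomputable def Good {F : Type*} [Field F] [Fintype F] {m k : ℕ}
    (L : Matrix (Fin m) (Fin k) F) (B : Finset (Fin k)) : Prop :=
  minLen L ≤ B.card ∧ delRank L B + (B.card - minLen L + 1) = m

/-- Restriction of a vector to the coordinates satisfying `p`, as a linear map. -/
noncomputable def projL (F : Type*) [Field F] {k : ℕ} (p : Fin k → Prop) :
    (Fin k → F) →ₗ[F] ({j : Fin k // p j} → F) :=
  LinearMap.funLeft F F (fun j => (j : Fin k))

lemma mem_ker_projL {F : Type*} [Field F] {k : ℕ} (p : Fin k → Prop) (v : Fin k → F) :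
    v ∈ LinearMap.ker (projL F p) ↔ ∀ j, p j → v j = 0 := by
  simp only [projL, LinearMap.mem_ker, LinearMap.funLeft_apply]
  rw [funext_iff]
  constructor
  · intro h j hj; exact h ⟨j, hj⟩
  · intro h j; exact h j.1 j.2

lemma finrank_map_add_inf_ker {F M N : Type*} [Field F] [AddCommGroup M] [Module F M]
    [AddCommGroup N] [Module F N] [FiniteDimensional F M]
    (π : M →ₗ[F] N) (W : Submodule F M) :
    Module.finrank F (W.map π) + Module.finrank F (W ⊓ LinearMap.ker π : Submodule F M)
      = Module.finrank F W := by
  have h := LinearMap.finrank_range_add_finrank_ker (π.comp W.subtype)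
  rw [LinearMap.range_comp, Submodule.range_subtype, LinearMap.ker_comp] at h
  have heq : Module.finrank F (Submodule.comap W.subtype (LinearMap.ker π))
      = Module.finrank F (W ⊓ LinearMap.ker π : Submodule F M) := by
    rw [(Submodule.equivMapOfInjective W.subtype (Submodule.injective_subtype W)
      (Submodule.comap W.subtype (LinearMap.ker π))).finrank_eq,
      Submodule.map_comap_subtype, inf_comm]
  rw [heq] at h
  exact h

lemma delRank_eq {F : Type*} [Field F] [Fintype F] {m k : ℕ}
    (L : Matrix (Fin m) (Fin k) F) (B : Finset (Fin k)) :
    delRank L B = Module.finrank F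
      ((Submodule.span F (Set.range fun i => L i)).map (projL F (fun j => j ∉ B))) := by
  rw [delRank, Matrix.rank_eq_finrank_span_row]
  have h1 : Set.range (L.submatrix id (fun j : {j : Fin k // j ∉ B} => (j : Fin k))).row
      = ⇑(projL F (fun j => j ∉ B)) '' Set.range (fun i => L i) := by
    rw [← Set.range_comp]; rfl
  rw [h1, Submodule.span_image]

lemma one_le_suppCard {F : Type*} [Field F] {k : ℕ} {v : Fin k → F} (hv : v ≠ 0) :
    1 ≤ suppCard v := by
  rw [Nat.one_le_iff_ne_zero, suppCard]
  intro h
  rw [Finset.card_eq_zero, Finset.filter_eq_empty_iff] at h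
  apply hv
  funext j
  simpa using not_not.mp (h (Finset.mem_univ j))

/-- every subset `B'` of a good set `B` with `|B'| ≥ s(L)` is itself good. -/
theorem subset_of_good_is_good
    {F : Type*} [Field F] [Fintype F] {m k : ℕ} (L : Matrix (Fin m) (Fin k) F)
    (hrank : L.rank = m)
    (B B' : Finset (Fin k)) (hB : Good L B) (hsub : B' ⊆ B) (hcard : minLen L ≤ B'.card) :
    Good L B' := by
  classical
  set s := minLen L with hs
  clear_value s
  set R := Submodule.span F (Set.range fun i => L i) with hR
  have hRm : Module.finrank F R = m := by
    rw [hR]; exact (Matrix.rank_eq_finrank_span_row L).symm.trans hrank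
  have key : ∀ C : Finset (Fin k),
      delRank L C + Module.finrank F
        (R ⊓ LinearMap.ker (projL F (fun j => j ∉ C)) : Submodule F (Fin k → F)) = m := by
    intro C
    rw [delRank_eq, ← hR, finrank_map_add_inf_ker, hRm]
  have hKB := key B
  have hKB' := key B'
  set W : Submodule F (Fin k → F) := R ⊓ LinearMap.ker (projL F (fun j => j ∉ B)) with hW
  set W' : Submodule F (Fin k → F) := R ⊓ LinearMap.ker (projL F (fun j => j ∉ B')) with hW'
  have hmin : ∀ v ∈ R, v ≠ 0 → s ≤ suppCard v := fun v hv hne => hs ▸ Nat.sInf_le ⟨v, hv, hne, rfl⟩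
  -- Singleton bound: finrank W' + s ≤ B'.card + 1
  obtain ⟨S, hSsub, hScard⟩ := Finset.exists_subset_card_eq (s := B') (n := s - 1) (by omega : s - 1 ≤ B'.card)
  have h1 : Module.finrank F W' + s ≤ B'.card + 1 := by
    have heq := finrank_map_add_inf_ker (projL F (fun j => j ∈ B' \ S)) W'
    have hbot : W' ⊓ LinearMap.ker (projL F (fun j => j ∈ B' \ S)) = ⊥ := by
      rw [eq_bot_iff]
      intro v hv
      rw [Submodule.mem_inf, hW', Submodule.mem_inf, mem_ker_projL, mem_ker_projL] at hv
      obtain ⟨⟨hvR, hv1⟩, hv2⟩ := hv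
      rw [Submodule.mem_bot]
      by_contra hne
      have h2 := hmin v hvR hne
      have h3 := one_le_suppCard hne
      have hle : suppCard v ≤ S.card := by
        apply Finset.card_le_card
        intro j hj
        simp only [Finset.mem_filter, Finset.mem_univ, true_and] at hj
        by_contra hjS
        by_cases hjB : j ∈ B'
        · exact hj (hv2 j (Finset.mem_sdiff.2 ⟨hjB, hjS⟩))
        · exact hj (hv1 j hjB)
      omega
    rw [hbot] at heq
    simp only [finrank_bot, add_zero] at heq
    have hle2 : Module.finrank F (W'.map (projL F (fun j => j ∈ B' \ S)))
        ≤ (B' \ S).card := by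
      have := Submodule.finrank_le (W'.map (projL F (fun j => j ∈ B' \ S)))
      rwa [Module.finrank_fintype_fun_eq_card, Fintype.card_coe] at this
    have hcards : (B' \ S).card = B'.card - S.card := Finset.card_sdiff_of_subset hSsub
    omega
  -- adding back columns: finrank W ≤ (B.card - B'.card) + finrank W'
  have h2 : Module.finrank F W ≤ (B.card - B'.card) + Module.finrank F W' := by
    have heq := finrank_map_add_inf_ker (projL F (fun j => j ∈ B \ B')) W
    have hWW : W ⊓ LinearMap.ker (projL F (fun j => j ∈ B \ B')) = W' := by
      ext v
      rw [Submodule.mem_inf, hW, hW', Submodule.mem_inf, Submodule.mem_inf,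
        mem_ker_projL, mem_ker_projL, mem_ker_projL]
      constructor
      · rintro ⟨⟨hvR, hv1⟩, hv2⟩
        refine ⟨hvR, fun j hj => ?_⟩
        by_cases hjB : j ∈ B
        · exact hv2 j (Finset.mem_sdiff.2 ⟨hjB, hj⟩)
        · exact hv1 j hjB
      · rintro ⟨hvR, hv1⟩
        exact ⟨⟨hvR, fun j hj => hv1 j (fun h => hj (hsub h))⟩,
          fun j hj => hv1 j (Finset.mem_sdiff.1 hj).2⟩
    rw [hWW] at heq
    have hle2 : Module.finrank F (W.map (projL F (fun j => j ∈ B \ B')))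
        ≤ (B \ B').card := by
      have := Submodule.finrank_le (W.map (projL F (fun j => j ∈ B \ B')))
      rwa [Module.finrank_fintype_fun_eq_card, Fintype.card_coe] at this
    have hcards : (B \ B').card = B.card - B'.card := Finset.card_sdiff_of_subset hsub
    omega
  have hBB' : B'.card ≤ B.card := Finset.card_le_card hsub
  have hB2 : delRank L B + (B.card - s + 1) = m := hs ▸ hB.2
  have hc' : s ≤ B'.card := hs ▸ hcard
  refine ⟨hs ▸ hcard, ?_⟩
  show delRank L B' + (B'.card - minLen L + 1) = m
  rw [← hs]
  omega
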